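/- For every real α, the class of finite simple graphs G with average cut-rank Eρ(G) ≤ α is well-quasi-ordered by the relation 'is isomorphic to an induced subgraph of': every infinite sequence G₁, G₂, … of graphs with Eρ(G_i) ≤ α contains indices i < j such that G_i is isomorphic to an induced subgraph of G_j. -/

import Mathlib

open scoped Classical

namespace AvgCutRank

variable {V : Type*} {W : Type*}

/-- Local complementation of `G` at a vertex `v`: complement the adjacency inside
the neighborhood of `v`. -/
def localComp (G : SimpleGraph V) (v : V) : SimpleGraph V where
  Adj x y := x ≠ y ∧ (G.Adj x y ↔ ¬(G.Adj v x ∧ G.Adj v y))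
  symm := ⟨by
    rintro x y ⟨hxy, h⟩
    refine ⟨hxy.symm, ?_⟩
    rw [G.adj_comm y x, and_comm]
    exact h⟩
  loopless := ⟨fun x h => h.1 rfl⟩

/-- Two graphs on the same vertex set are locally equivalent if one is obtained from
the other by a sequence of local complementations. -/
def LocallyEquivalent (G H : SimpleGraph V) : Prop :=
  Relation.ReflTransGen (fun A B => ∃ v, B = localComp A v) G H

/-- `H` is (isomorphic to) a vertex-minor of `G`: `H` is isomorphic to an induced
subgraph of a graph locally equivalent to `G`. -/
def IsVertexMinor (H : SimpleGraph W) (G : SimpleGraph V) : Prop :=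
  ∃ (G' : SimpleGraph V) (s : Set V), LocallyEquivalent G G' ∧ Nonempty (H ≃g G'.induce s)

/-- The cut-rank of a set `X` of vertices: the rank over GF(2) of the `X × Xᶜ`
adjacency submatrix. -/
noncomputable def cutRank [Fintype V] [DecidableEq V] (G : SimpleGraph V)
    (X : Finset V) : ℕ :=
  (Matrix.of fun (i : X) (j : (Xᶜ : Finset V)) =>
    if G.Adj i.1 j.1 then (1 : ZMod 2) else 0).rank

/-- The average cut-rank of a graph. -/
noncomputable def avgCutRank [Fintype V] [DecidableEq V] (G : SimpleGraph V) : ℝ :=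
  (∑ X : Finset V, (cutRank G X : ℝ)) / 2 ^ Fintype.card V

/-- The maximum cut-rank of a graph. -/
noncomputable def maxCutRank [Fintype V] [DecidableEq V] (G : SimpleGraph V) : ℕ :=
  Finset.univ.sup (cutRank G)

/-- `x` and `y` are equal or twins: they have the same neighbors outside `{x, y}`. -/
def TwinEq (G : SimpleGraph V) (x y : V) : Prop :=
  x = y ∨ ∀ z, z ≠ x → z ≠ y → (G.Adj x z ↔ G.Adj y z)

/-- `x` and `y` are twins. -/
def IsTwins (G : SimpleGraph V) (x y : V) : Prop :=
  x ≠ y ∧ ∀ z, z ≠ x → z ≠ y → (G.Adj x z ↔ G.Adj y z)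

/-- Neighborhood diversity: the number of twin classes. -/
noncomputable def nd [Fintype V] [DecidableEq V] (G : SimpleGraph V) : ℕ :=
  (Finset.univ.image fun x => Finset.univ.filter fun y => TwinEq G x y).card

/-- The minimum rank of a graph over a field `F`. -/
noncomputable def minRank (F : Type*) [Field F] [Fintype V] [DecidableEq V]
    (G : SimpleGraph V) : ℕ :=
  sInf { r : ℕ | ∃ A : Matrix V V F, A.IsSymm ∧
    (∀ i j, i ≠ j → (A i j ≠ 0 ↔ G.Adj i j)) ∧ A.rank = r }

/-- The clique delta-cover number: the minimum `t` such that the edge set of `G` is the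
symmetric difference of the edge sets of `t` complete graphs (given by their vertex sets). -/
noncomputable def cliqueDeltaCover [Fintype V] [DecidableEq V] (G : SimpleGraph V) : ℕ :=
  sInf { t : ℕ | ∃ S : Fin t → Finset V, ∀ x y : V, x ≠ y →
    (G.Adj x y ↔ Odd (Finset.univ.filter fun i => x ∈ S i ∧ y ∈ S i).card) }

/-- `C` is the vertex set of an attached star in `G`: the subgraph induced on `C` is a
star (with center `c`) all of whose noncentral vertices are leaves of `G`. -/
def IsAttachedStar (G : SimpleGraph V) (C : Set V) : Prop :=
  ∃ c ∈ C, (∃ x ∈ C, x ≠ c) ∧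
    ∀ x ∈ C, x ≠ c → G.Adj c x ∧ ∀ y, G.Adj x y → y = c

/-- Deletion of a vertex: the induced subgraph on the complement of `{v}`. -/
def deleteVert (G : SimpleGraph V) (v : V) : SimpleGraph {w : V // w ≠ v} :=
  SimpleGraph.comap Subtype.val G

/-- Deletion of a finite set of vertices. -/
def deleteVerts (G : SimpleGraph V) (T : Finset V) : SimpleGraph {w : V // w ∉ T} :=
  SimpleGraph.comap Subtype.val G

/-- The star `K_{1,m}` with center `0`. -/
def starGraph (m : ℕ) : SimpleGraph (Fin (m + 1)) :=
  SimpleGraph.fromRel fun x _ => x = 0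

/-- The disjoint union of three copies of `K₂`. -/
def threeK2 : SimpleGraph (Fin 6) :=
  SimpleGraph.fromRel fun x y =>
    (x = 0 ∧ y = 1) ∨ (x = 2 ∧ y = 3) ∨ (x = 4 ∧ y = 5)

/-- The disjoint union of two paths on three vertices. -/
def twoP3 : SimpleGraph (Fin 6) :=
  SimpleGraph.fromRel fun x y =>
    (x = 0 ∧ y = 1) ∨ (x = 1 ∧ y = 2) ∨ (x = 3 ∧ y = 4) ∨ (x = 4 ∧ y = 5)

/-- The disjoint union of `K₂` and the star `K_{1,k+1}`. -/
def K2PlusStar (k : ℕ) : SimpleGraph (Fin (k + 4)) :=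
  SimpleGraph.fromRel fun x y => (x.val = 0 ∧ y.val = 1) ∨ (x.val = 2 ∧ 3 ≤ y.val)

/-- `E_k`: the star `K_{1,k+1}` with one edge subdivided. Vertex `0` is the center,
`1` is the subdivision vertex, `2` is the leaf behind it, `3, …, k+2` are leaves. -/
def Egraph (k : ℕ) : SimpleGraph (Fin (k + 3)) :=
  SimpleGraph.fromRel fun x y =>
    (x.val = 0 ∧ y.val = 1) ∨ (x.val = 1 ∧ y.val = 2) ∨ (x.val = 0 ∧ 3 ≤ y.val)

/-- Finite graphs represented on the vertex sets `Fin n`. -/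
abbrev GraphOn := Σ n : ℕ, SimpleGraph (Fin n)

/-- `H` is isomorphic to an induced subgraph of `G`. -/
def IsIndSubgraph (H G : GraphOn) : Prop :=
  ∃ s : Set (Fin G.1), Nonempty (H.2 ≃g G.2.induce s)

/-- The sequence `x_n(ε)` from the paper. -/
noncomputable def xseq (ε : ℝ) : ℕ → ℤ
  | 0 => max ⌊2 - Real.logb 2 (1 - ε)⌋ 5
  | n + 1 => 2 ^ (8 * (n + 1) + 10) *
      ⌊(xseq ε n : ℝ) - Real.logb 2 (1 - Int.fract ((2 : ℝ) ^ (xseq ε n) * ε / 2)) + 1⌋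



/-! ### Auxiliary machinery for Statement 4 -/

theorem twinEq_symm {G : SimpleGraph V} {x y : V} (h : TwinEq G x y) : TwinEq G y x := by
  rcases h with h | h
  · exact Or.inl h.symm
  · exact Or.inr fun z hzy hzx => (h z hzx hzy).symm

theorem twinEq_adj_iff {G : SimpleGraph V} {x x' v : V} (h : TwinEq G x x')
    (hxv : x ≠ v) (hx'v : x' ≠ v) : (G.Adj x v ↔ G.Adj x' v) := by
  rcases h with h | h
  · rw [h]
  · exact h v (Ne.symm hxv) (Ne.symm hx'v)

theorem twinEq_trans {G : SimpleGraph V} {x y z : V} (h1 : TwinEq G x y)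
    (h2 : TwinEq G y z) : TwinEq G x z := by
  rcases h1 with rfl | h1
  · exact h2
  rcases h2 with rfl | h2
  · exact Or.inr h1
  by_cases hxz : x = z
  · exact Or.inl hxz
  refine Or.inr fun w hwx hwz => ?_
  by_cases hwy : w = y
  · subst hwy
    by_cases hxw : x = w
    · exact absurd hxw.symm hwx
    have e1 : G.Adj w x ↔ G.Adj z x := h2 x hxw hxz
    have e2 : G.Adj x z ↔ G.Adj w z := h1 z (Ne.symm hxz) (Ne.symm hwz)
    rw [G.adj_comm x w, e1, G.adj_comm z x, e2, G.adj_comm w z]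
  · exact (h1 w hwx hwy).trans (h2 w hwy hwz)

/-- Adjacency is determined by the twin classes of the endpoints. -/
theorem twinEq_adj_of_adj {G : SimpleGraph V} {x y x' y' : V} (hx : TwinEq G x x')
    (hy : TwinEq G y y') (hxy : x ≠ y) (hxy' : x' ≠ y') (hadj : G.Adj x' y') :
    G.Adj x y := by
  by_cases h1 : x = y'
  · subst h1
    by_cases h2 : x' = y
    · subst h2; exact hadj.symm
    · by_cases h3 : x' = x
      · subst h3; exact absurd hadj (G.loopless.irrefl _)
      · have t : TwinEq G x' y := twinEq_trans (twinEq_symm hx) (twinEq_symm hy)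
        have := (twinEq_adj_iff t h3 (Ne.symm hxy)).mp hadj
        exact this.symm
  · have step1 : G.Adj x y' := (twinEq_adj_iff (twinEq_symm hx) hxy' h1).mp hadj
    by_cases h2 : y' = y
    · exact h2 ▸ step1
    · have := (twinEq_adj_iff (twinEq_symm hy) (Ne.symm h1) (Ne.symm hxy)).mp step1.symm
      exact this.symm

/-- Existence of a minimal distinguishing set of vertices. -/
theorem exists_min_dist [Fintype V] [DecidableEq V] (G : SimpleGraph V) :
    ∃ Z : Finset V,
      (∀ x y : V, (∀ z ∈ Z, z ≠ x → z ≠ y → (G.Adj x z ↔ G.Adj y z)) → TwinEq G x y) ∧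
      (∀ z ∈ Z, ∃ x y : V, x ≠ y ∧ z ≠ x ∧ z ≠ y ∧ ¬(G.Adj x z ↔ G.Adj y z) ∧
        ∀ z' ∈ Z, z' ≠ z → z' ≠ x → z' ≠ y → (G.Adj x z' ↔ G.Adj y z')) := by
  have hPuniv : ∀ x y : V, (∀ z ∈ (Finset.univ : Finset V), z ≠ x → z ≠ y →
      (G.Adj x z ↔ G.Adj y z)) → TwinEq G x y := by
    intro x y h
    by_cases hxy : x = y
    · exact Or.inl hxy
    · exact Or.inr fun z hzx hzy => h z (Finset.mem_univ z) hzx hzy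
  have hex : ∃ n : ℕ, ∃ Z : Finset V, Z.card = n ∧
      ∀ x y : V, (∀ z ∈ Z, z ≠ x → z ≠ y → (G.Adj x z ↔ G.Adj y z)) → TwinEq G x y :=
    ⟨Finset.univ.card, Finset.univ, rfl, hPuniv⟩
  obtain ⟨Z, hZcard, hZ⟩ := Nat.find_spec hex
  refine ⟨Z, hZ, fun z hz => ?_⟩
  have hlt : (Z.erase z).card < Nat.find hex := by
    have h1 : 0 < Z.card := Finset.card_pos.mpr ⟨z, hz⟩
    have h2 := Finset.card_erase_of_mem hz
    omega
  have hnP : ¬ ∀ x y : V, (∀ z' ∈ Z.erase z, z' ≠ x → z' ≠ y →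
      (G.Adj x z' ↔ G.Adj y z')) → TwinEq G x y :=
    fun hp => Nat.find_min hex hlt ⟨Z.erase z, rfl, hp⟩
  push_neg at hnP
  obtain ⟨x, y, hagree, hnt⟩ := hnP
  have hxy : x ≠ y := fun h => hnt (Or.inl h)
  have hzx : z ≠ x := by
    intro h
    apply hnt
    apply hZ x y
    intro z' hz' hz'x hz'y
    exact hagree z' (Finset.mem_erase.mpr ⟨fun he => hz'x (he.trans h), hz'⟩) hz'x hz'y
  have hzy : z ≠ y := by
    intro h
    apply hnt
    apply hZ x y
    intro z' hz' hz'x hz'y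
    exact hagree z' (Finset.mem_erase.mpr ⟨fun he => hz'y (he.trans h), hz'⟩) hz'x hz'y
  have hdiff : ¬(G.Adj x z ↔ G.Adj y z) := by
    intro hiff
    apply hnt
    apply hZ x y
    intro z' hz' hz'x hz'y
    by_cases hz'z : z' = z
    · exact hz'z ▸ hiff
    · exact hagree z' (Finset.mem_erase.mpr ⟨hz'z, hz'⟩) hz'x hz'y
  exact ⟨x, y, hxy, hzx, hzy, hdiff, fun z' hz' hz'z hz'x hz'y =>
    hagree z' (Finset.mem_erase.mpr ⟨hz'z, hz'⟩) hz'x hz'y⟩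

theorem counting_lemma [Fintype V] [DecidableEq V] {x y z : V}
    (hxy : x ≠ y) (hzx : z ≠ x) (hzy : z ≠ y) :
    2 ^ (Fintype.card V - 3) ≤
      (Finset.univ.filter fun S : Finset V => x ∈ S ∧ y ∈ S ∧ z ∉ S).card := by
  classical
  set R : Finset V := ((Finset.univ.erase x).erase y).erase z with hR
  have hcardR : R.card = Fintype.card V - 3 := by
    rw [hR, Finset.card_erase_of_mem, Finset.card_erase_of_mem, Finset.card_erase_of_mem]
    · simp [Finset.card_univ]; omega
    · exact Finset.mem_univ x
    · exact Finset.mem_erase.mpr ⟨hxy.symm, Finset.mem_univ y⟩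
    · exact Finset.mem_erase.mpr ⟨hzy, Finset.mem_erase.mpr ⟨hzx, Finset.mem_univ z⟩⟩
  have := Finset.card_le_card_of_injOn (fun T => insert x (insert y T))
    (s := R.powerset)
    (t := Finset.univ.filter fun S : Finset V => x ∈ S ∧ y ∈ S ∧ z ∉ S)
    (by
      intro T hT
      rw [Finset.mem_coe, Finset.mem_powerset] at hT
      rw [Finset.mem_coe]
      refine Finset.mem_filter.mpr ⟨Finset.mem_univ _, Finset.mem_insert_self _ _,
        Finset.mem_insert.mpr (Or.inr (Finset.mem_insert_self _ _)), ?_⟩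
      intro hzmem
      rcases Finset.mem_insert.mp hzmem with h | h
      · exact hzx h
      rcases Finset.mem_insert.mp h with h | h
      · exact hzy h
      · have := hT h
        rw [hR] at this
        exact (Finset.mem_erase.mp this).1 rfl)
    (by
      intro T hT T' hT' heq
      rw [Finset.mem_coe, Finset.mem_powerset] at hT hT'
      have hx : ∀ T'' : Finset V, T'' ⊆ R →
          ((insert x (insert y T'')).erase x).erase y = T'' := by
        intro T'' hsub
        have hxnot : x ∉ insert y T'' := by
          intro h
          rcases Finset.mem_insert.mp h with h | h
          · exact hxy h
          · have hmem := hsub h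
            rw [hR] at hmem
            simp [Finset.mem_erase] at hmem
        have hynot : y ∉ T'' := by
          intro h
          have := hsub h; rw [hR] at this
          exact (Finset.mem_erase.mp (Finset.mem_erase.mp this).2).1 rfl
        rw [Finset.erase_insert hxnot, Finset.erase_insert hynot]
      simp only [] at heq
      rw [← hx T hT, ← hx T' hT', heq])
  calc 2 ^ (Fintype.card V - 3) = R.powerset.card := by rw [Finset.card_powerset, hcardR]
  _ ≤ _ := this

theorem card_le_cutRank [Fintype V] [DecidableEq V] (G : SimpleGraph V) (S : Finset V)
    (Z : Finset V) (xz yz : V → V)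
    (hprop : ∀ z ∈ Z, z ≠ xz z ∧ z ≠ yz z ∧ ¬(G.Adj (xz z) z ↔ G.Adj (yz z) z) ∧
      ∀ z' ∈ Z, z' ≠ z → z' ≠ xz z → z' ≠ yz z → (G.Adj (xz z) z' ↔ G.Adj (yz z) z')) :
    (Z.filter fun z => xz z ∈ S ∧ yz z ∈ S ∧ z ∉ S).card ≤ cutRank G S := by
  haveI : Fact (Nat.Prime 2) := ⟨Nat.prime_two⟩
  set I : Finset V := Z.filter fun z => xz z ∈ S ∧ yz z ∈ S ∧ z ∉ S with hI
  have memI : ∀ z : ↑I, (z : V) ∈ Z ∧ xz z ∈ S ∧ yz z ∈ S ∧ (z : V) ∉ S := by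
    intro z
    have h := Finset.mem_filter.mp z.2
    exact ⟨h.1, h.2⟩
  set M : Matrix ↑S ↑(Sᶜ : Finset V) (ZMod 2) :=
    Matrix.of (fun i j => if G.Adj i.1 j.1 then (1 : ZMod 2) else 0) with hM
  have hxS : ∀ z : ↑I, xz z ∈ S := fun z => (memI z).2.1
  have hyS : ∀ z : ↑I, yz z ∈ S := fun z => (memI z).2.2.1
  have hcomp : ∀ z : ↑I, (z : V) ∈ Sᶜ := fun z => Finset.mem_compl.mpr (memI z).2.2.2
  set E : Matrix ↑I ↑S (ZMod 2) := Matrix.of (fun zi si =>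
    (if (si : V) = xz zi then (1 : ZMod 2) else 0) +
    (if (si : V) = yz zi then (1 : ZMod 2) else 0)) with hE
  set F : Matrix ↑(Sᶜ : Finset V) ↑I (ZMod 2) :=
    Matrix.of (fun cj zj => if (cj : V) = (zj : V) then (1 : ZMod 2) else 0) with hF
  have hEM : ∀ (z : ↑I) (c : ↑(Sᶜ : Finset V)),
      (E * M) z c = M ⟨xz z, hxS z⟩ c + M ⟨yz z, hyS z⟩ c := by
    intro z c
    rw [Matrix.mul_apply]
    have hterm : ∀ s : ↑S, E z s * M s c =
        (if s = ⟨xz z, hxS z⟩ then M s c else 0) +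
        (if s = ⟨yz z, hyS z⟩ then M s c else 0) := by
      intro s
      have e1 : ((s : V) = xz ↑z) = (s = ⟨xz z, hxS z⟩) := by
        rw [Subtype.ext_iff]
      have e2 : ((s : V) = yz ↑z) = (s = ⟨yz z, hyS z⟩) := by
        rw [Subtype.ext_iff]
      rw [hE]
      simp only [Matrix.of_apply, e1, e2, add_mul, ite_mul, one_mul, zero_mul]
    rw [Finset.sum_congr rfl (fun s _ => hterm s), Finset.sum_add_distrib]
    rw [Finset.sum_ite_eq' Finset.univ, Finset.sum_ite_eq' Finset.univ]
    simp
  have hone : E * M * F = 1 := by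
    ext z z'
    rw [Matrix.mul_apply]
    have hterm : ∀ c : ↑(Sᶜ : Finset V), (E * M) z c * F c z' =
        (if c = ⟨(z' : V), hcomp z'⟩ then (E * M) z c else 0) := by
      intro c
      have e1 : ((c : V) = (z' : V)) = (c = ⟨(z' : V), hcomp z'⟩) := by
        rw [Subtype.ext_iff]
      rw [hF]
      simp only [Matrix.of_apply, e1, mul_ite, mul_one, mul_zero]
    rw [Finset.sum_congr rfl (fun c _ => hterm c), Finset.sum_ite_eq' Finset.univ]
    simp only [Finset.mem_univ, if_true]
    rw [hEM]
    obtain ⟨hzZ, hxzS, hyzS, hznS⟩ := memI z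
    obtain ⟨hne1, hne2, hdiff, hagree⟩ := hprop (z : V) hzZ
    by_cases hzz : z = z'
    · subst hzz
      rw [Matrix.one_apply_eq]
      rw [hM]
      simp only [Matrix.of_apply]
      by_cases h1 : G.Adj (xz z) (z : V)
      · have h2 : ¬ G.Adj (yz z) (z : V) := fun h2 => hdiff ⟨fun _ => h2, fun _ => h1⟩
        rw [if_pos h1, if_neg h2, add_zero]
      · have h2 : G.Adj (yz z) (z : V) := by
          by_contra h2
          exact hdiff ⟨fun h => absurd h h1, fun h => absurd h h2⟩
        rw [if_neg h1, if_pos h2, zero_add]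
    · rw [Matrix.one_apply_ne hzz]
      obtain ⟨hz'Z, hxz'S, hyz'S, hz'nS⟩ := memI z'
      have hvalne : (z' : V) ≠ (z : V) := fun h => hzz (Subtype.ext h.symm)
      have hz'x : (z' : V) ≠ xz z := fun h => hz'nS (h ▸ hxzS)
      have hz'y : (z' : V) ≠ yz z := fun h => hz'nS (h ▸ hyzS)
      have hiff := hagree (z' : V) hz'Z hvalne hz'x hz'y
      rw [hM]
      simp only [Matrix.of_apply]
      by_cases h1 : G.Adj (xz z) (z' : V)
      · rw [if_pos h1, if_pos (hiff.mp h1)]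
        exact CharTwo.add_self_eq_zero 1
      · rw [if_neg h1, if_neg (fun h => h1 (hiff.mpr h)), add_zero]
  have hrank : Fintype.card ↑I ≤ M.rank := by
    calc Fintype.card ↑I = (1 : Matrix ↑I ↑I (ZMod 2)).rank := (Matrix.rank_one).symm
    _ = (E * M * F).rank := by rw [hone]
    _ ≤ (E * M).rank := Matrix.rank_mul_le_left _ _
    _ ≤ M.rank := Matrix.rank_mul_le_right _ _
  calc I.card = Fintype.card ↑I := (Fintype.card_coe I).symm
  _ ≤ M.rank := hrank
  _ = cutRank G S := rfl

theorem avgCutRank_nonneg [Fintype V] [DecidableEq V] (G : SimpleGraph V) :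
    0 ≤ avgCutRank G := by
  unfold avgCutRank
  positivity

theorem tcard_le_eight_avg [Fintype V] [DecidableEq V] (G : SimpleGraph V)
    (Z : Finset V) (xz yz : V → V)
    (hprop : ∀ z ∈ Z, xz z ≠ yz z ∧ z ≠ xz z ∧ z ≠ yz z ∧
      ¬(G.Adj (xz z) z ↔ G.Adj (yz z) z) ∧
      ∀ z' ∈ Z, z' ≠ z → z' ≠ xz z → z' ≠ yz z → (G.Adj (xz z) z' ↔ G.Adj (yz z) z')) :
    (Z.card : ℝ) ≤ 8 * avgCutRank G := by
  rcases Finset.eq_empty_or_nonempty Z with hZe | ⟨z0, hz0⟩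
  · subst hZe
    simp only [Finset.card_empty, Nat.cast_zero]
    exact mul_nonneg (by norm_num) (avgCutRank_nonneg G)
  have hprop' : ∀ z ∈ Z, z ≠ xz z ∧ z ≠ yz z ∧ ¬(G.Adj (xz z) z ↔ G.Adj (yz z) z) ∧
      ∀ z' ∈ Z, z' ≠ z → z' ≠ xz z → z' ≠ yz z → (G.Adj (xz z) z' ↔ G.Adj (yz z) z') :=
    fun z hz => ⟨(hprop z hz).2.1, (hprop z hz).2.2.1, (hprop z hz).2.2.2.1,
      (hprop z hz).2.2.2.2⟩
  have hn3 : 3 ≤ Fintype.card V := by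
    obtain ⟨hne, h1, h2, -, -⟩ := hprop z0 hz0
    have hcard : ({z0, xz z0, yz z0} : Finset V).card = 3 := by
      rw [Finset.card_insert_of_notMem (by simp [h1, h2]),
        Finset.card_insert_of_notMem (by simp [hne]), Finset.card_singleton]
    calc 3 = ({z0, xz z0, yz z0} : Finset V).card := hcard.symm
    _ ≤ (Finset.univ : Finset V).card := Finset.card_le_univ _
    _ = Fintype.card V := Finset.card_univ
  have key : Z.card * 2 ^ (Fintype.card V - 3) ≤ ∑ S : Finset V, cutRank G S := by
    calc Z.card * 2 ^ (Fintype.card V - 3)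
        = ∑ _z ∈ Z, 2 ^ (Fintype.card V - 3) := by
          rw [Finset.sum_const, smul_eq_mul]
      _ ≤ ∑ z ∈ Z, (Finset.univ.filter
            fun S : Finset V => xz z ∈ S ∧ yz z ∈ S ∧ z ∉ S).card := by
          apply Finset.sum_le_sum
          intro z hz
          obtain ⟨hne, h1, h2, -, -⟩ := hprop z hz
          exact counting_lemma hne h1 h2
      _ = ∑ z ∈ Z, ∑ S : Finset V, (if xz z ∈ S ∧ yz z ∈ S ∧ z ∉ S then 1 else 0) := by
          apply Finset.sum_congr rfl
          intro z _
          rw [Finset.card_filter]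
      _ = ∑ S : Finset V, ∑ z ∈ Z, (if xz z ∈ S ∧ yz z ∈ S ∧ z ∉ S then 1 else 0) :=
          Finset.sum_comm
      _ = ∑ S : Finset V, (Z.filter fun z => xz z ∈ S ∧ yz z ∈ S ∧ z ∉ S).card := by
          apply Finset.sum_congr rfl
          intro S _
          rw [Finset.card_filter]
      _ ≤ ∑ S : Finset V, cutRank G S := by
          apply Finset.sum_le_sum
          intro S _
          exact card_le_cutRank G S Z xz yz hprop'
  have key2 : Z.card * 2 ^ Fintype.card V ≤ 8 * ∑ S : Finset V, cutRank G S := by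
    have hpow : 2 ^ Fintype.card V = 2 ^ (Fintype.card V - 3) * 8 := by
      have h : Fintype.card V - 3 + 3 = Fintype.card V := by omega
      calc 2 ^ Fintype.card V = 2 ^ (Fintype.card V - 3 + 3) := by rw [h]
      _ = 2 ^ (Fintype.card V - 3) * 2 ^ 3 := pow_add 2 _ 3
      _ = 2 ^ (Fintype.card V - 3) * 8 := rfl
    calc Z.card * 2 ^ Fintype.card V = Z.card * 2 ^ (Fintype.card V - 3) * 8 := by
          rw [hpow, mul_assoc]
    _ ≤ (∑ S : Finset V, cutRank G S) * 8 := by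
          exact Nat.mul_le_mul_right 8 key
    _ = 8 * ∑ S : Finset V, cutRank G S := Nat.mul_comm _ _
  unfold avgCutRank
  rw [mul_div_assoc']
  rw [le_div_iff₀ (by positivity)]
  have := (Nat.cast_le (α := ℝ)).mpr key2
  push_cast at this ⊢
  linarith

/-- Every graph is a blow-up of a template on `2 ^ t` classes,
where `t ≤ 8 ⬝ avgCutRank`. -/
theorem exists_blowup_structure [Fintype V] [DecidableEq V] (G : SimpleGraph V) :
    ∃ (t : ℕ) (c : V → Fin (2 ^ t)) (T : Fin (2 ^ t) → Fin (2 ^ t) → Bool),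
      (t : ℝ) ≤ 8 * avgCutRank G ∧
      ∀ x y : V, x ≠ y → (G.Adj x y ↔ T (c x) (c y) = true) := by
  obtain ⟨Z, hZ, htrip⟩ := exists_min_dist G
  choose xz0 yz0 hprop0 using htrip
  set xz : V → V := fun z => if hz : z ∈ Z then xz0 z hz else z with hxzdef
  set yz : V → V := fun z => if hz : z ∈ Z then yz0 z hz else z with hyzdef
  have hprop : ∀ z ∈ Z, xz z ≠ yz z ∧ z ≠ xz z ∧ z ≠ yz z ∧
      ¬(G.Adj (xz z) z ↔ G.Adj (yz z) z) ∧
      ∀ z' ∈ Z, z' ≠ z → z' ≠ xz z → z' ≠ yz z → (G.Adj (xz z) z' ↔ G.Adj (yz z) z') := by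
    intro z hz
    have h := hprop0 z hz
    simp only [hxzdef, hyzdef, dif_pos hz]
    exact h
  refine ⟨Z.card, ?_⟩
  have hcard : Fintype.card (↑Z → Bool) = 2 ^ Z.card := by
    rw [Fintype.card_fun, Fintype.card_bool, Fintype.card_coe]
  obtain e := Fintype.equivFinOfCardEq hcard
  set c : V → Fin (2 ^ Z.card) :=
    fun x => e (fun z : ↑Z => decide (G.Adj x (z : V))) with hcdef
  have hc : ∀ x y : V, c x = c y → TwinEq G x y := by
    intro x y hcxy
    apply hZ
    intro z hzZ _ _
    have := congrFun (e.injective hcxy) ⟨z, hzZ⟩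
    simpa [decide_eq_decide] using this
  set T : Fin (2 ^ Z.card) → Fin (2 ^ Z.card) → Bool :=
    fun a b => decide (∃ x y : V, x ≠ y ∧ G.Adj x y ∧ c x = a ∧ c y = b) with hTdef
  refine ⟨c, T, tcard_le_eight_avg G Z xz yz hprop, ?_⟩
  intro x y hxy
  constructor
  · intro hadj
    simp only [hTdef, decide_eq_true_eq]
    exact ⟨x, y, hxy, hadj, rfl, rfl⟩
  · intro hT
    simp only [hTdef, decide_eq_true_eq] at hT
    obtain ⟨x', y', hxy', hadj', hcx, hcy⟩ := hT
    exact twinEq_adj_of_adj (hc x x' hcx.symm) (hc y y' hcy.symm) hxy hxy' hadj'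

/-- Transport a blow-up structure along an increase of the number of classes. -/
theorem blowup_mono (G : SimpleGraph V) {N M : ℕ} (hNM : N ≤ M)
    (c : V → Fin N) (T : Fin N → Fin N → Bool)
    (hT : ∀ x y : V, x ≠ y → (G.Adj x y ↔ T (c x) (c y) = true)) :
    ∃ (c' : V → Fin M) (T' : Fin M → Fin M → Bool),
      ∀ x y : V, x ≠ y → (G.Adj x y ↔ T' (c' x) (c' y) = true) := by
  refine ⟨fun x => Fin.castLE hNM (c x),
    fun a b => if ha : a.val < N then if hb : b.val < N then T ⟨a.val, ha⟩ ⟨b.val, hb⟩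
      else false else false, ?_⟩
  intro x y hxy
  beta_reduce
  rw [hT x y hxy]
  have hx : ((Fin.castLE hNM (c x)) : Fin M).val < N := (c x).isLt
  have hy : ((Fin.castLE hNM (c y)) : Fin M).val < N := (c y).isLt
  rw [dif_pos hx, dif_pos hy]
  have e1 : (⟨((Fin.castLE hNM (c x)) : Fin M).val, hx⟩ : Fin N) = c x := Fin.ext rfl
  have e2 : (⟨((Fin.castLE hNM (c y)) : Fin M).val, hy⟩ : Fin N) = c y := Fin.ext rfl
  rw [e1, e2]

/-- The key embedding lemma between blow-ups of the same template. -/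
theorem blowup_embed [Fintype V] [DecidableEq V] [Fintype W] [DecidableEq W]
    (G : SimpleGraph V) (H : SimpleGraph W) {N : ℕ}
    (cG : V → Fin N) (cH : W → Fin N) (T : Fin N → Fin N → Bool)
    (hG : ∀ x y : V, x ≠ y → (G.Adj x y ↔ T (cG x) (cG y) = true))
    (hH : ∀ x y : W, x ≠ y → (H.Adj x y ↔ T (cH x) (cH y) = true))
    (hsize : ∀ a : Fin N, (Finset.univ.filter fun x : V => cG x = a).card ≤
      (Finset.univ.filter fun y : W => cH y = a).card) :
    ∃ s : Set W, Nonempty (G ≃g H.induce s) := by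
  have hcard : ∀ a : Fin N, Fintype.card {x : V // cG x = a} ≤
      Fintype.card {y : W // cH y = a} := by
    intro a
    rw [Fintype.card_subtype, Fintype.card_subtype]
    exact hsize a
  have hemb : ∀ a : Fin N, Nonempty ({x : V // cG x = a} ↪ {y : W // cH y = a}) :=
    fun a => Function.Embedding.nonempty_of_card_le (hcard a)
  have emb : ∀ a : Fin N, {x : V // cG x = a} ↪ {y : W // cH y = a} :=
    fun a => (hemb a).some
  set φ : V → W := fun x => (emb (cG x) ⟨x, rfl⟩ : {y : W // cH y = cG x}).val with hφdef
  have hφc : ∀ x : V, cH (φ x) = cG x := fun x => (emb (cG x) ⟨x, rfl⟩).2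
  have haux : ∀ (a a' : Fin N) (_ : a = a') (x : V) (hx : cG x = a) (hx' : cG x = a'),
      ((emb a ⟨x, hx⟩ : {y : W // cH y = a}) : W) =
      ((emb a' ⟨x, hx'⟩ : {y : W // cH y = a'}) : W) := by
    intro a a' h
    subst h
    intro x hx hx'
    rfl
  have hinj : Function.Injective φ := by
    intro x x' heq
    have ha : cG x' = cG x := by rw [← hφc x, ← hφc x', heq]
    have h1 : ((emb (cG x) ⟨x, rfl⟩ : {y : W // cH y = cG x}) : W) =
        ((emb (cG x) ⟨x', ha⟩ : {y : W // cH y = cG x}) : W) := by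
      calc ((emb (cG x) ⟨x, rfl⟩ : {y : W // cH y = cG x}) : W) = φ x := rfl
      _ = φ x' := heq
      _ = ((emb (cG x') ⟨x', rfl⟩ : {y : W // cH y = cG x'}) : W) := rfl
      _ = _ := haux (cG x') (cG x) ha x' rfl ha
    have h2 := (emb (cG x)).injective (Subtype.ext h1)
    exact congrArg Subtype.val h2
  have hadj : ∀ x y : V, G.Adj x y ↔ H.Adj (φ x) (φ y) := by
    intro x y
    by_cases hxy : x = y
    · subst hxy
      simp
    · have hφxy : φ x ≠ φ y := fun h => hxy (hinj h)
      rw [hG x y hxy, hH (φ x) (φ y) hφxy, hφc, hφc]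
  refine ⟨Set.range φ, ⟨⟨Equiv.ofInjective φ hinj, ?_⟩⟩⟩
  intro a b
  show H.Adj (φ a) (φ b) ↔ G.Adj a b
  exact (hadj a b).symm

/-- Dickson-type lemma: monotone subsequence for finitely many ℕ coordinates. -/
theorem dickson (m : ℕ) : ∀ f : ℕ → Fin m → ℕ,
    ∃ g : ℕ → ℕ, StrictMono g ∧ ∀ (a : Fin m) (i j : ℕ), i ≤ j → f (g i) a ≤ f (g j) a := by
  induction m with
  | zero => exact fun f => ⟨id, strictMono_id, fun a => a.elim0⟩
  | succ m ih =>
    intro f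
    have hpwo : (Set.univ : Set ℕ).IsPWO := (Set.isWF_univ_iff.mpr inferInstance).isPWO
    obtain ⟨g0, hg0⟩ := hpwo.exists_monotone_subseq
      (fun n => Set.mem_univ (f n 0))
    obtain ⟨g1, hsm1, hmono1⟩ := ih (fun n a => f (g0 n) a.succ)
    refine ⟨fun n => g0 (g1 n), g0.strictMono.comp hsm1, ?_⟩
    intro a i j hij
    refine Fin.cases ?_ ?_ a
    · exact hg0 (hsm1.monotone hij)
    · intro b
      exact hmono1 b i j hij

/-- An infinite set of naturals has an increasing enumeration. -/
theorem exists_enum {s : Set ℕ} (hs : s.Infinite) :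
    ∃ e : ℕ → ℕ, StrictMono e ∧ ∀ n, e n ∈ s := by
  haveI := hs.to_subtype
  refine ⟨fun n => Nat.orderEmbeddingOfSet s n, (Nat.orderEmbeddingOfSet s).strictMono, ?_⟩
  intro n
  show (Nat.orderEmbeddingOfSet s) n ∈ s
  rw [Nat.orderEmbeddingOfSet_apply]
  exact (Nat.Subtype.ofNat s n).2

/-- Every class of graphs of bounded average cut-rank is
well-quasi-ordered by the induced subgraph relation. -/
theorem stmt4 (α : ℝ) (V : ℕ → Type) [∀ i, Fintype (V i)] [∀ i, DecidableEq (V i)]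
    (G : ∀ i, SimpleGraph (V i)) (h : ∀ i, avgCutRank (G i) ≤ α) :
    ∃ i j, i < j ∧ ∃ s : Set (V j), Nonempty (G i ≃g (G j).induce s) := by
  set tm := ⌊8 * α⌋₊ with htm
  set N := 2 ^ tm with hN
  have hdata : ∀ i, ∃ (c : V i → Fin N) (T : Fin N → Fin N → Bool),
      ∀ x y : V i, x ≠ y → ((G i).Adj x y ↔ T (c x) (c y) = true) := by
    intro i
    obtain ⟨t, c, T, hbound, hT⟩ := exists_blowup_structure (G i)
    have ht : t ≤ tm := Nat.le_floor (by
      have := h i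
      calc (t : ℝ) ≤ 8 * avgCutRank (G i) := hbound
      _ ≤ 8 * α := by linarith)
    exact blowup_mono (G i) (Nat.pow_le_pow_right (by norm_num) ht) c T hT
  choose cf Tf hTf using hdata
  obtain ⟨T₀, hT₀⟩ := Finite.exists_infinite_fiber Tf
  have hinf : (Tf ⁻¹' {T₀}).Infinite := Set.infinite_coe_iff.mp hT₀
  obtain ⟨e, he_mono, he_mem⟩ := exists_enum hinf
  have hTeq : ∀ n, Tf (e n) = T₀ := fun n => he_mem n
  obtain ⟨g, hg_mono, hg⟩ := dickson N
    (fun n a => (Finset.univ.filter fun x : V (e n) => cf (e n) x = a).card)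
  refine ⟨e (g 0), e (g 1), he_mono (hg_mono (by norm_num)), ?_⟩
  apply blowup_embed (G (e (g 0))) (G (e (g 1))) (cf _) (cf _) T₀ ?_ ?_ ?_
  · intro x y hxy
    rw [hTf _ x y hxy, hTeq (g 0)]
  · intro x y hxy
    rw [hTf _ x y hxy, hTeq (g 1)]
  · intro a
    exact hg a 0 1 (by norm_num)

end AvgCutRank
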